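/- Let 𝒳, 𝒜 be nonempty finite types, p_X a probability mass function on 𝒳, and ℓ : 𝒳 × 𝒜 → ℝ a nonnegative loss function. The value of Shannon's information V_I(R) = min_a Σ_x p_X(x)ℓ(x,a) − inf { Σ_{x,a} p_X(x) p_{A|X}(a|x) ℓ(x,a) : I(p_X, p_{A|X}) ≤ R } is concave on [0, ∞): for all R₁, R₂ ≥ 0 and λ ∈ [0,1], V_I(λ R₁ + (1−λ) R₂) ≥ λ V_I(R₁) + (1−λ) V_I(R₂). -/

import Mathlib

open Finset Real

/-- A probability mass function on a finite type. -/
def IsPMF {Z : Type*} [Fintype Z] (p : Z → ℝ) : Prop :=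
  (∀ z, 0 ≤ p z) ∧ ∑ z, p z = 1

/-- A channel from `X` to `A`: a family of pmfs on `A` indexed by `X`. -/
def IsChannel {X A : Type*} [Fintype X] [Fintype A] (W : X → A → ℝ) : Prop :=
  ∀ x, IsPMF (W x)

/-- Expected loss `Σ_{x,a} p_X(x) p_{A|X}(a|x) ℓ(x,a)`. -/
noncomputable def expLoss {X A : Type*} [Fintype X] [Fintype A]
    (pX : X → ℝ) (ℓ : X → A → ℝ) (W : X → A → ℝ) : ℝ :=
  ∑ x, ∑ a, pX x * W x a * ℓ x a

/-- Shannon's mutual information `I(p_X, p_{A|X})`, with the `0 log 0 = 0` convention. -/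
noncomputable def mutualInfo {X A : Type*} [Fintype X] [Fintype A]
    (pX : X → ℝ) (W : X → A → ℝ) : ℝ :=
  ∑ x, ∑ a, if pX x * W x a = 0 then 0
    else pX x * W x a * Real.log (W x a / (∑ x', pX x' * W x' a))

/-- The value of Shannon's information `V_I(R)`. -/
noncomputable def shannonVoI {X A : Type*} [Fintype X] [Fintype A]
    (pX : X → ℝ) (ℓ : X → A → ℝ) (R : ℝ) : ℝ :=
  (⨅ a, ∑ x, pX x * ℓ x a) -
    sInf (expLoss pX ℓ '' {p : X → A → ℝ | IsChannel p ∧ mutualInfo pX p ≤ R})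


noncomputable def glog (u v : ℝ) : ℝ := if u = 0 then 0 else u * Real.log (u / v)

lemma glog_scale (c u v : ℝ) (hc : 0 < c) : glog (c*u) (c*v) = c * glog u v := by
  unfold glog
  by_cases hu : u = 0
  · simp [hu]
  · rw [if_neg (mul_ne_zero hc.ne' hu), if_neg hu,
      mul_div_mul_left _ _ hc.ne']
    ring

lemma glog_add_le (u₁ u₂ v₁ v₂ : ℝ) (hu₁ : 0 ≤ u₁) (hu₂ : 0 ≤ u₂)
    (hv₁ : 0 ≤ v₁) (hv₂ : 0 ≤ v₂)
    (h₁ : u₁ ≠ 0 → 0 < v₁) (h₂ : u₂ ≠ 0 → 0 < v₂) :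
    glog (u₁ + u₂) (v₁ + v₂) ≤ glog u₁ v₁ + glog u₂ v₂ := by
  unfold glog
  by_cases h1 : u₁ = 0
  · by_cases h2 : u₂ = 0
    · simp [h1, h2]
    · have hu₂' : 0 < u₂ := lt_of_le_of_ne hu₂ (Ne.symm h2)
      have hv₂' := h₂ h2
      rw [if_neg (by positivity : u₁ + u₂ ≠ 0), if_pos h1, if_neg h2, h1, zero_add, zero_add]
      have : u₂ / (v₁ + v₂) ≤ u₂ / v₂ :=
        div_le_div_of_nonneg_left hu₂ hv₂' (by linarith)
      exact mul_le_mul_of_nonneg_left (Real.log_le_log (by positivity) this) hu₂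
  · by_cases h2 : u₂ = 0
    · have hu₁' : 0 < u₁ := lt_of_le_of_ne hu₁ (Ne.symm h1)
      have hv₁' := h₁ h1
      rw [if_neg (by positivity : u₁ + u₂ ≠ 0), if_pos h2, if_neg h1, h2, add_zero, add_zero]
      have : u₁ / (v₁ + v₂) ≤ u₁ / v₁ :=
        div_le_div_of_nonneg_left hu₁ hv₁' (by linarith)
      exact mul_le_mul_of_nonneg_left (Real.log_le_log (by positivity) this) hu₁
    · have hu₁' : 0 < u₁ := lt_of_le_of_ne hu₁ (Ne.symm h1)
      have hu₂' : 0 < u₂ := lt_of_le_of_ne hu₂ (Ne.symm h2)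
      have hv₁' := h₁ h1
      have hv₂' := h₂ h2
      have hs : 0 < u₁ + u₂ := by linarith
      rw [if_neg hs.ne', if_neg h1, if_neg h2]
      have key := (strictConcaveOn_log_Ioi.concaveOn).2
        (Set.mem_Ioi.2 (div_pos hv₁' hu₁')) (Set.mem_Ioi.2 (div_pos hv₂' hu₂'))
        (show (0:ℝ) ≤ u₁/(u₁+u₂) by positivity) (show (0:ℝ) ≤ u₂/(u₁+u₂) by positivity)
        (show u₁/(u₁+u₂) + u₂/(u₁+u₂) = 1 by field_simp)
      simp only [smul_eq_mul] at key
      have harg : u₁/(u₁+u₂) * (v₁/u₁) + u₂/(u₁+u₂) * (v₂/u₂) = (v₁+v₂)/(u₁+u₂) := by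
        field_simp
      rw [harg] at key
      have key2 := mul_le_mul_of_nonneg_left key hs.le
      rw [Real.log_div hv₁'.ne' hu₁'.ne', Real.log_div hv₂'.ne' hu₂'.ne',
        Real.log_div (by positivity) hs.ne'] at key2
      rw [Real.log_div hu₁'.ne' hv₁'.ne', Real.log_div hu₂'.ne' hv₂'.ne',
        Real.log_div hs.ne' (by positivity)]
      have e1 : (u₁+u₂) * (u₁/(u₁+u₂) * (Real.log v₁ - Real.log u₁)
          + u₂/(u₁+u₂) * (Real.log v₂ - Real.log u₂))
          = u₁ * (Real.log v₁ - Real.log u₁) + u₂ * (Real.log v₂ - Real.log u₂) := by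
        field_simp
      rw [e1] at key2
      nlinarith [key2]


lemma glog_combo (t w₁ w₂ q₁ q₂ : ℝ) (ht0 : 0 ≤ t) (ht1 : t ≤ 1)
    (hw₁ : 0 ≤ w₁) (hw₂ : 0 ≤ w₂) (hq₁' : 0 ≤ q₁) (hq₂' : 0 ≤ q₂)
    (hq₁ : w₁ ≠ 0 → 0 < q₁) (hq₂ : w₂ ≠ 0 → 0 < q₂) :
    glog (t*w₁ + (1-t)*w₂) (t*q₁ + (1-t)*q₂) ≤ t * glog w₁ q₁ + (1-t) * glog w₂ q₂ := by
  rcases eq_or_lt_of_le ht0 with h0 | h0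
  · simp [← h0]
  rcases eq_or_lt_of_le ht1 with h1 | h1
  · simp [h1]
  have hs : 0 < 1 - t := by linarith
  have := glog_add_le (t*w₁) ((1-t)*w₂) (t*q₁) ((1-t)*q₂)
    (by positivity) (by positivity) (by positivity) (by positivity)
    (fun h => mul_pos h0 (hq₁ (by intro hw; rw [hw, mul_zero] at h; exact h rfl)))
    (fun h => mul_pos hs (hq₂ (by intro hw; rw [hw, mul_zero] at h; exact h rfl)))
  rwa [glog_scale _ _ _ h0, glog_scale _ _ _ hs] at this

lemma mutualInfo_eq {X A : Type*} [Fintype X] [Fintype A] (pX : X → ℝ) (W : X → A → ℝ) :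
    mutualInfo pX W = ∑ x, ∑ a, pX x * glog (W x a) (∑ x', pX x' * W x' a) := by
  unfold mutualInfo glog
  refine Finset.sum_congr rfl fun x _ => Finset.sum_congr rfl fun a _ => ?_
  by_cases hp : pX x = 0
  · simp [hp]
  · by_cases hw : W x a = 0
    · simp [hw]
    · rw [if_neg (mul_ne_zero hp hw), if_neg hw]; ring

lemma mutualInfo_convex {X A : Type*} [Fintype X] [Fintype A]
    (pX : X → ℝ) (hpX : IsPMF pX) (W₁ W₂ : X → A → ℝ)
    (h₁ : IsChannel W₁) (h₂ : IsChannel W₂) (t : ℝ) (ht0 : 0 ≤ t) (ht1 : t ≤ 1) :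
    mutualInfo pX (fun x a => t * W₁ x a + (1-t) * W₂ x a)
      ≤ t * mutualInfo pX W₁ + (1-t) * mutualInfo pX W₂ := by
  rw [mutualInfo_eq, mutualInfo_eq, mutualInfo_eq, Finset.mul_sum, Finset.mul_sum,
    ← Finset.sum_add_distrib]
  refine Finset.sum_le_sum fun x _ => ?_
  rw [Finset.mul_sum, Finset.mul_sum, ← Finset.sum_add_distrib]
  refine Finset.sum_le_sum fun a _ => ?_
  by_cases hp : pX x = 0
  · simp [hp]
  have hpx : 0 < pX x := lt_of_le_of_ne (hpX.1 x) (Ne.symm hp)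
  have hsum : ∑ x', pX x' * (t * W₁ x' a + (1-t) * W₂ x' a)
      = t * (∑ x', pX x' * W₁ x' a) + (1-t) * (∑ x', pX x' * W₂ x' a) := by
    rw [Finset.mul_sum, Finset.mul_sum, ← Finset.sum_add_distrib]
    exact Finset.sum_congr rfl fun x' _ => by ring
  rw [hsum, mul_comm t (pX x * _), mul_comm (1-t) (pX x * _), mul_assoc, mul_assoc,
    ← mul_add]
  refine mul_le_mul_of_nonneg_left ?_ hpx.le
  rw [mul_comm (glog _ _) t, mul_comm (glog _ _) (1-t)]
  refine glog_combo t _ _ _ _ ht0 ht1 ((h₁ x).1 a) ((h₂ x).1 a)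
    (Finset.sum_nonneg fun x' _ => mul_nonneg (hpX.1 x') ((h₁ x').1 a))
    (Finset.sum_nonneg fun x' _ => mul_nonneg (hpX.1 x') ((h₂ x').1 a))
    (fun hne => ?_) (fun hne => ?_)
  · have : 0 < pX x * W₁ x a :=
      mul_pos hpx (lt_of_le_of_ne ((h₁ x).1 a) (Ne.symm hne))
    exact lt_of_lt_of_le this (Finset.single_le_sum
      (fun x' _ => mul_nonneg (hpX.1 x') ((h₁ x').1 a)) (Finset.mem_univ x))
  · have : 0 < pX x * W₂ x a :=
      mul_pos hpx (lt_of_le_of_ne ((h₂ x).1 a) (Ne.symm hne))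
    exact lt_of_lt_of_le this (Finset.single_le_sum
      (fun x' _ => mul_nonneg (hpX.1 x') ((h₂ x').1 a)) (Finset.mem_univ x))


lemma losses_nonneg {X A : Type*} [Fintype X] [Fintype A]
    (pX : X → ℝ) (hpX : IsPMF pX) (ℓ : X → A → ℝ) (hℓ : ∀ x a, 0 ≤ ℓ x a)
    (W : X → A → ℝ) (hW : IsChannel W) : 0 ≤ expLoss pX ℓ W :=
  Finset.sum_nonneg fun x _ => Finset.sum_nonneg fun a _ =>
    mul_nonneg (mul_nonneg (hpX.1 x) ((hW x).1 a)) (hℓ x a)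

theorem shannonVoI_concave
    {X A : Type*} [Fintype X] [Fintype A] [Nonempty X] [Nonempty A]
    (pX : X → ℝ) (hpX : IsPMF pX)
    (ℓ : X → A → ℝ) (hℓ : ∀ x a, 0 ≤ ℓ x a)
    (R₁ R₂ : ℝ) (hR₁ : 0 ≤ R₁) (hR₂ : 0 ≤ R₂)
    (t : ℝ) (ht0 : 0 ≤ t) (ht1 : t ≤ 1) :
    t * shannonVoI pX ℓ R₁ + (1 - t) * shannonVoI pX ℓ R₂
      ≤ shannonVoI pX ℓ (t * R₁ + (1 - t) * R₂) := by
  classical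
  set S : ℝ → Set ℝ :=
    fun R => expLoss pX ℓ '' {p : X → A → ℝ | IsChannel p ∧ mutualInfo pX p ≤ R} with hS
  -- the trivial channel
  set a₀ : A := Classical.arbitrary A with ha₀
  set W₀ : X → A → ℝ := fun _ a => if a = a₀ then 1 else 0 with hW₀
  have hW₀chan : IsChannel W₀ := by
    intro x
    constructor
    · intro a; by_cases h : a = a₀ <;> simp [hW₀, h]
    · simp [hW₀]
  have hW₀info : mutualInfo pX W₀ = 0 := by
    unfold mutualInfo
    refine Finset.sum_eq_zero fun x _ => Finset.sum_eq_zero fun a _ => ?_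
    by_cases h : a = a₀
    · have hq : ∑ x', pX x' * W₀ x' a = 1 := by
        simp [hW₀, h, hpX.2]
      have hw : W₀ x a = 1 := by simp [hW₀, h]
      rw [hw, hq]
      norm_num
    · simp [hW₀, h]
  have hSne : ∀ R, 0 ≤ R → (S R).Nonempty := by
    intro R hR
    exact ⟨expLoss pX ℓ W₀, ⟨W₀, ⟨hW₀chan, by rw [hW₀info]; exact hR⟩, rfl⟩⟩
  have hSbdd : ∀ R, BddBelow (S R) := by
    intro R
    exact ⟨0, fun d ⟨W, ⟨hWc, _⟩, hd⟩ => hd ▸ losses_nonneg pX hpX ℓ hℓ W hWc⟩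
  -- key convexity inequality for the inf
  have key : sInf (S (t * R₁ + (1-t) * R₂)) ≤ t * sInf (S R₁) + (1-t) * sInf (S R₂) := by
    refine le_of_forall_pos_le_add fun ε hε => ?_
    obtain ⟨d₁, ⟨W₁, ⟨hW₁c, hW₁i⟩, hd₁⟩, hd₁lt⟩ := Real.lt_sInf_add_pos (hSne R₁ hR₁) hε
    obtain ⟨d₂, ⟨W₂, ⟨hW₂c, hW₂i⟩, hd₂⟩, hd₂lt⟩ := Real.lt_sInf_add_pos (hSne R₂ hR₂) hε
    set Wm : X → A → ℝ := fun x a => t * W₁ x a + (1-t) * W₂ x a with hWm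
    have hWmc : IsChannel Wm := by
      intro x
      constructor
      · intro a
        have := (hW₁c x).1 a
        have := (hW₂c x).1 a
        have h1t : 0 ≤ 1 - t := by linarith
        positivity
      · rw [show (fun a => Wm x a) = fun a => t * W₁ x a + (1-t) * W₂ x a from rfl]
        rw [Finset.sum_add_distrib, ← Finset.mul_sum, ← Finset.mul_sum,
          (hW₁c x).2, (hW₂c x).2]
        ring
    have hWmi : mutualInfo pX Wm ≤ t * R₁ + (1-t) * R₂ := by
      refine le_trans (mutualInfo_convex pX hpX W₁ W₂ hW₁c hW₂c t ht0 ht1) ?_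
      have h1t : 0 ≤ 1 - t := by linarith
      exact add_le_add (mul_le_mul_of_nonneg_left hW₁i ht0)
        (mul_le_mul_of_nonneg_left hW₂i h1t)
    have hWmL : expLoss pX ℓ Wm = t * d₁ + (1-t) * d₂ := by
      rw [← hd₁, ← hd₂]
      unfold expLoss
      rw [Finset.mul_sum, Finset.mul_sum, ← Finset.sum_add_distrib]
      refine Finset.sum_congr rfl fun x _ => ?_
      rw [Finset.mul_sum, Finset.mul_sum, ← Finset.sum_add_distrib]
      exact Finset.sum_congr rfl fun a _ => by simp [hWm]; ring
    have hmem : expLoss pX ℓ Wm ∈ S (t * R₁ + (1-t) * R₂) := ⟨Wm, ⟨hWmc, hWmi⟩, rfl⟩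
    have h1 := csInf_le (hSbdd _) hmem
    have h1t : 0 ≤ 1 - t := by linarith
    nlinarith [mul_le_mul_of_nonneg_left hd₁lt.le ht0,
      mul_le_mul_of_nonneg_left hd₂lt.le h1t]
  unfold shannonVoI
  nlinarith [key]
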